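/- Let H be a real vector space with two inner products B and L, and suppose λ₁ > 0 satisfies λ₁ ≤ R(w) = ‖w‖_B²/‖w‖_L² for all nonzero w ∈ H. Let (u_k) be a sequence of nonzero elements of H satisfying ⟨u_{k+1}, φ⟩_B = R(u_k) ⟨u_k, φ⟩_L for all φ ∈ H and all k. Then for all k ≥ 1: ‖u_k‖_L ≤ (R(u_0)/λ₁) ‖u_0‖_L and ‖u_k‖_B² ≤ (R(u_0)³/λ₁²) ‖u_0‖_L². -/

import Mathlib

/-- Cauchy–Schwarz for a symmetric bilinear form with nonnegative diagonal. -/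
lemma cs_aux {V : Type*} [AddCommGroup V] [Module ℝ V]
    (B : LinearMap.BilinForm ℝ V) (hs : ∀ x y, B x y = B y x)
    (hnn : ∀ x, 0 ≤ B x x) (x y : V) : (B x y) ^ 2 ≤ B x x * B y y := by
  have expand : ∀ t : ℝ, B (x + t • y) (x + t • y)
      = B y y * (t * t) + (2 * B x y) * t + B x x := by
    intro t
    simp only [map_add, LinearMap.add_apply, map_smul, LinearMap.smul_apply,
      smul_eq_mul, hs y x]
    ring
  have h : ∀ t : ℝ, 0 ≤ B y y * (t * t) + (2 * B x y) * t + B x x := by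
    intro t
    have := hnn (x + t • y)
    rwa [expand t] at this
  have hd := discrim_le_zero h
  rw [discrim] at hd
  nlinarith [hd]

/-- Uniform bounds on the inverse iteration sequence:
‖u_k‖_L ≤ (R(u₀)/λ₁)‖u₀‖_L and ‖u_k‖_B² ≤ (R(u₀)³/λ₁²)‖u₀‖_L² for k ≥ 1. -/
theorem stmt_3 {V : Type*} [AddCommGroup V] [Module ℝ V]
    (B L : LinearMap.BilinForm ℝ V)
    (hBsymm : ∀ x y, B x y = B y x) (hLsymm : ∀ x y, L x y = L y x)
    (hBpos : ∀ x, x ≠ 0 → 0 < B x x) (hLpos : ∀ x, x ≠ 0 → 0 < L x x)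
    (lam : ℝ) (hlam : 0 < lam)
    (hlow : ∀ w : V, w ≠ 0 → lam ≤ B w w / L w w)
    (u : ℕ → V) (hne : ∀ k, u k ≠ 0)
    (hiter : ∀ k, ∀ φ : V,
      B (u (k + 1)) φ = (B (u k) (u k) / L (u k) (u k)) * L (u k) φ) :
    ∀ k ≥ 1,
      Real.sqrt (L (u k) (u k)) ≤
        (B (u 0) (u 0) / L (u 0) (u 0)) / lam * Real.sqrt (L (u 0) (u 0)) ∧
      B (u k) (u k) ≤
        (B (u 0) (u 0) / L (u 0) (u 0)) ^ 3 / lam ^ 2 * L (u 0) (u 0) := by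
  have hBnn : ∀ x, 0 ≤ B x x := by
    intro x; rcases eq_or_ne x 0 with h | h
    · simp [h]
    · exact (hBpos x h).le
  have hLnn : ∀ x, 0 ≤ L x x := by
    intro x; rcases eq_or_ne x 0 with h | h
    · simp [h]
    · exact (hLpos x h).le
  set R : ℕ → ℝ := fun k => B (u k) (u k) / L (u k) (u k) with hRdef
  set b : ℕ → ℝ := fun k => B (u k) (u k) with hbdef
  set l : ℕ → ℝ := fun k => L (u k) (u k) with hldef
  have hl : ∀ k, 0 < l k := fun k => hLpos _ (hne k)
  have hb : ∀ k, 0 < b k := fun k => hBpos _ (hne k)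
  have hR : ∀ k, lam ≤ R k := fun k => hlow _ (hne k)
  have hRpos : ∀ k, 0 < R k := fun k => lt_of_lt_of_le hlam (hR k)
  have hbl : ∀ k, b k = R k * l k := by
    intro k
    have := (hl k).ne'
    exact (div_mul_cancel₀ (b k) this).symm
  -- key identity
  have key : ∀ k, b (k + 1) = R k * L (u k) (u (k + 1)) :=
    fun k => hiter k (u (k + 1))
  -- square of cross term bound
  have csL : ∀ k, (L (u k) (u (k + 1))) ^ 2 ≤ l k * l (k + 1) :=
    fun k => cs_aux L hLsymm hLnn _ _
  -- b(k+1)^2 ≤ R k ^2 * l k * l (k+1)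
  have hb2 : ∀ k, (b (k + 1)) ^ 2 ≤ (R k) ^ 2 * (l k * l (k + 1)) := by
    intro k
    rw [key k, mul_pow]
    exact mul_le_mul_of_nonneg_left (csL k) (sq_nonneg _)
  -- step: lam^2 * l (k+1) ≤ R k ^2 * l k
  have lstep : ∀ k, lam ^ 2 * l (k + 1) ≤ (R k) ^ 2 * l k := by
    intro k
    have h1 : lam * l (k + 1) ≤ b (k + 1) := by
      have := hR (k + 1)
      have h2 := hbl (k + 1)
      nlinarith [hl (k + 1)]
    have := hb2 k
    nlinarith [hl (k + 1), mul_pos hlam (hl (k + 1)), hb (k + 1)]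
  -- step: q decreasing
  have qstep : ∀ k, (R (k + 1)) ^ 2 * l (k + 1) ≤ (R k) ^ 2 * l k := by
    intro k
    have h2 := hbl (k + 1)
    have := hb2 k
    nlinarith [hl (k + 1), hb (k + 1), sq_nonneg (R (k + 1))]
  -- step: R decreasing
  have hlower : ∀ k, R k * l k ≤ b (k + 1) := by
    intro k
    have hcross : B (u (k + 1)) (u k) = R k * l k := by
      have := hiter k (u k); simpa using this
    have hcs : (B (u (k + 1)) (u k)) ^ 2 ≤ b (k + 1) * b k :=
      cs_aux B hBsymm hBnn _ _
    rw [hcross] at hcs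
    have hpos : 0 < R k * l k := mul_pos (hRpos k) (hl k)
    nlinarith [hb (k + 1), hbl k]
  have Rstep : ∀ k, R (k + 1) ≤ R k := by
    intro k
    have h1 := hlower k
    have h2 := hb2 k
    have h3 := hbl (k + 1)
    have hpos : 0 < R k * l k := mul_pos (hRpos k) (hl k)
    -- b(k+1) ≤ R k * l (k+1)
    have h4 : b (k + 1) ≤ R k * l (k + 1) := by
      nlinarith [hb (k + 1), hl (k + 1), hRpos k, hl k]
    nlinarith [hl (k + 1), hRpos (k + 1)]
  have Rmono : ∀ k, R k ≤ R 0 := by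
    intro k; induction k with
    | zero => exact le_refl _
    | succ n ih => exact le_trans (Rstep n) ih
  have qmono : ∀ k, (R k) ^ 2 * l k ≤ (R 0) ^ 2 * l 0 := by
    intro k; induction k with
    | zero => exact le_refl _
    | succ n ih => exact le_trans (qstep n) ih
  intro k hk
  obtain ⟨m, rfl⟩ : ∃ m, k = m + 1 := ⟨k - 1, by omega⟩
  have hlk : lam ^ 2 * l (m + 1) ≤ (R 0) ^ 2 * l 0 :=
    le_trans (lstep m) (qmono m)
  have hlk' : l (m + 1) ≤ (R 0 / lam) ^ 2 * l 0 := by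
    rw [div_pow]
    rw [← sub_nonneg]
    have hlam2 : (0:ℝ) < lam ^ 2 := by positivity
    have : (R 0) ^ 2 / lam ^ 2 * l 0 - l (m + 1)
        = ((R 0) ^ 2 * l 0 - lam ^ 2 * l (m + 1)) / lam ^ 2 := by
      field_simp
    rw [this]
    apply div_nonneg _ hlam2.le
    linarith
  constructor
  · have h1 : Real.sqrt (l (m + 1)) ≤ Real.sqrt ((R 0 / lam) ^ 2 * l 0) :=
      Real.sqrt_le_sqrt hlk'
    rwa [Real.sqrt_mul (sq_nonneg _), Real.sqrt_sq
      (div_nonneg (hRpos 0).le hlam.le)] at h1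
  · have h1 : b (m + 1) = R (m + 1) * l (m + 1) := hbl (m + 1)
    have h2 : R (m + 1) ≤ R 0 := Rmono (m + 1)
    have h3 : b (m + 1) ≤ R 0 * l (m + 1) :=
      h1 ▸ mul_le_mul_of_nonneg_right h2 (hl (m + 1)).le
    have h4 : R 0 * l (m + 1) ≤ R 0 * ((R 0 / lam) ^ 2 * l 0) :=
      mul_le_mul_of_nonneg_left hlk' (hRpos 0).le
    have h5 : R 0 * ((R 0 / lam) ^ 2 * l 0) = (R 0) ^ 3 / lam ^ 2 * l 0 := by
      field_simp
    calc b (m + 1) ≤ R 0 * l (m + 1) := h3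
      _ ≤ R 0 * ((R 0 / lam) ^ 2 * l 0) := h4
      _ = (R 0) ^ 3 / lam ^ 2 * l 0 := h5
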